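/- Let U be an unfounded set of a ground HEX-program Π with respect to a complete assignment A, and let C ⊆ U be a cut of U, i.e., (i) no atom of C has an incoming or internal e-edge from any atom of U, and (ii) there are no ordinary dependency edges between C and U \ C in either direction. Then U \ C is an unfounded set of Π with respect to A. -/
import Mathlib


/-- A ground external atom: a set of input atoms and an oracle function whose
value depends only on the assignment restricted to the input atoms. -/
structure ExtAtom (Atom : Type) where
  inputs : Finset Atom
  eval : (Atom → Bool) → Bool
  dep : ∀ A B : Atom → Bool, (∀ a ∈ inputs, A a = B a) → eval A = eval B

/-- A ground HEX-rule: head, ordinary positive body, ordinary negative body,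
positive external body, negative external body. -/
structure Rule (Atom : Type) where
  head : Finset Atom
  posOrd : Finset Atom
  negOrd : Finset Atom
  posExt : List (ExtAtom Atom)
  negExt : List (ExtAtom Atom)

/-- A ground HEX-program is a set of rules (finiteness is assumed explicitly). -/
abbrev Program (Atom : Type) := Set (Rule Atom)

variable {Atom : Type} [DecidableEq Atom]

/-- The ordinary atoms occurring in a rule. -/
def Rule.atoms (r : Rule Atom) : Finset Atom :=
  r.head ∪ r.posOrd ∪ r.negOrd ∪
    ((r.posExt ++ r.negExt).foldr (fun e s => e.inputs ∪ s) ∅)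

/-- The ordinary atoms `A(Π)` occurring in a program. -/
def progAtoms (P : Program Atom) : Set Atom := ⋃ r ∈ P, (r.atoms : Set Atom)

/-- `A ∪̇¬ X`: set all atoms of `X` to false in `A`. -/
def unplug (A : Atom → Bool) (X : Finset Atom) : Atom → Bool :=
  fun a => A a && !(decide (a ∈ X))

/-- All body literals of `r` are true wrt. the complete assignment `B`. -/
def Rule.bodyTrueAt (r : Rule Atom) (B : Atom → Bool) : Prop :=
  (∀ a ∈ r.posOrd, B a = true) ∧ (∀ a ∈ r.negOrd, B a = false) ∧
  (∀ e ∈ r.posExt, e.eval B = true) ∧ (∀ e ∈ r.negExt, e.eval B = false)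

/-- Some body literal of `r` is false wrt. the complete assignment `B`. -/
def Rule.bodyFalseAt (r : Rule Atom) (B : Atom → Bool) : Prop :=
  (∃ a ∈ r.posOrd, B a = false) ∨ (∃ a ∈ r.negOrd, B a = true) ∨
  (∃ e ∈ r.posExt, e.eval B = false) ∨ (∃ e ∈ r.negExt, e.eval B = true)

/-- `X` is an unfounded set of `P` wrt. the complete assignment `A`
(Definition of unfounded sets for HEX-programs). -/
def isUnfounded (P : Program Atom) (A : Atom → Bool) (X : Finset Atom) : Prop :=
  ∀ r ∈ P, (r.head ∩ X).Nonempty →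
    r.bodyFalseAt A ∨ r.bodyFalseAt (unplug A X) ∨
    ∃ h ∈ r.head, h ∉ X ∧ A h = true

/-- `A` is a (complete) model of `P`. -/
def isModel (A : Atom → Bool) (P : Program Atom) : Prop :=
  ∀ r ∈ P, r.bodyTrueAt A → ∃ h ∈ r.head, A h = true

/-- Ordinary dependency `a → b`. -/
def ordDep (P : Program Atom) (a b : Atom) : Prop :=
  ∃ r ∈ P, a ∈ r.head ∧ b ∈ r.posOrd

/-- External dependency (e-edge) `a →ₑ b`. -/
def eDep (P : Program Atom) (a b : Atom) : Prop :=
  ∃ r ∈ P, a ∈ r.head ∧ ∃ e ∈ r.posExt ++ r.negExt, b ∈ e.inputs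

/-- The relation `→ᵈ = → ∪ →⁻¹ ∪ →ₑ`. -/
def dDep (P : Program Atom) (a b : Atom) : Prop :=
  ordDep P a b ∨ ordDep P b a ∨ eDep P a b

/-- `C` is a cut of the unfounded set `U`: `C ⊆ U`, `C` has no incoming or
internal e-edges from `U`, and there are no ordinary edges between `C` and
`U \ C` in either direction. -/
def isCut (P : Program Atom) (U C : Finset Atom) : Prop :=
  C ⊆ U ∧ (∀ a ∈ C, ∀ b ∈ U, ¬ eDep P b a) ∧
  (∀ a ∈ C, ∀ b ∈ U \ C, ¬ ordDep P a b ∧ ¬ ordDep P b a)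

/-- Some body literal of the rule corresponding to `r` in the guessing program
`Π̂` is false wrt. `B` extended to the compatible extension `Â` of `A`:
ordinary literals are evaluated at `B`, while external replacement atoms obtain
(by compatibility) the oracle value at `A`. -/
def Rule.bodyFalseHat (r : Rule Atom) (A B : Atom → Bool) : Prop :=
  (∃ a ∈ r.posOrd, B a = false) ∨ (∃ a ∈ r.negOrd, B a = true) ∨
  (∃ e ∈ r.posExt, e.eval A = false) ∨ (∃ e ∈ r.negExt, e.eval A = true)

/-- `X` (a set of ordinary atoms) is an unfounded set of the guessing program
`Π̂` wrt. the compatible extension `Â` of `A`.  Since `X` contains only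
ordinary atoms and the guessing rules have only replacement atoms in their
heads, this unfolds to the condition below, where replacement atoms keep their
(compatible) value under `Â ∪̇¬ X`. -/
def isUnfoundedHat (P : Program Atom) (A : Atom → Bool) (X : Finset Atom) : Prop :=
  ∀ r ∈ P, (r.head ∩ X).Nonempty →
    r.bodyFalseHat A A ∨ r.bodyFalseHat A (unplug A X) ∨
    ∃ h ∈ r.head, h ∉ X ∧ A h = true

/-- The set `S` contains a cycle under `→ᵈ` that uses at least one e-edge. -/
def hasECycleIn (P : Program Atom) (S : Set Atom) : Prop :=
  ∃ (n : ℕ) (c : ℕ → Atom),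
    (∀ i ≤ n, dDep P (c i) (c (i+1))) ∧ c 0 = c (n+1) ∧
    (∀ i ≤ n+1, c i ∈ S) ∧ ∃ i ≤ n, eDep P (c i) (c (i+1))

/-- `a` is a cyclic input atom: some `b` with `b →ₑ a` and a path from `a`
to `b` under `→ᵈ`. -/
def cyclicInput (P : Program Atom) (a : Atom) : Prop :=
  ∃ b, eDep P b a ∧ Relation.ReflTransGen (dDep P) a b

/-- The FLP-reduct `fΠ^A`. -/
def flpReduct (P : Program Atom) (A : Atom → Bool) : Program Atom :=
  { r ∈ P | r.bodyTrueAt A }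

/-- `A₁ ≤_Π A₂`. -/
def leP (P : Program Atom) (A₁ A₂ : Atom → Bool) : Prop :=
  ∀ a ∈ progAtoms P, A₁ a = true → A₂ a = true

/-- `A` is an answer set of `P`: a `≤_Π`-minimal model of the FLP-reduct. -/
def isAnswerSet (P : Program Atom) (A : Atom → Bool) : Prop :=
  isModel A (flpReduct P A) ∧
  ∀ A' : Atom → Bool, isModel A' (flpReduct P A) → leP P A' A → leP P A A'

/-- The dependency relation `→ ∪ →ₑ` used for strongly connected components. -/
def dep (P : Program Atom) (a b : Atom) : Prop := ordDep P a b ∨ eDep P a b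

/-- Mutual reachability under `→ ∪ →ₑ`. -/
def sameSCC (P : Program Atom) (a b : Atom) : Prop :=
  Relation.ReflTransGen (dep P) a b ∧ Relation.ReflTransGen (dep P) b a

/-- The strongly connected component of `a` under `→ ∪ →ₑ`. -/
def scc (P : Program Atom) (a : Atom) : Set Atom := { b | sameSCC P a b }

/-- The subprogram `Π_C` associated with a component `C`. -/
def subprog (P : Program Atom) (C : Set Atom) : Program Atom :=
  { r ∈ P | ∃ h ∈ r.head, h ∈ C }

/-- Unfounded Set Reduction Lemma: removing a cut from an unfounded set
yields an unfounded set. -/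
theorem unfounded_set_reduction (P : Program Atom) (hP : P.Finite)
    (A : Atom → Bool) (U C : Finset Atom)
    (hU : isUnfounded P A U) (hC : isCut P U C) :
    isUnfounded P A (U \ C) := by
  obtain ⟨hCU, hE, hO⟩ := hC
  have key : ∀ a : Atom, a ∉ C → unplug A (U \ C) a = unplug A U a := by
    intro a hac
    simp [unplug, Finset.mem_sdiff, hac]
  intro r hr hne
  obtain ⟨h0, hh0⟩ := hne
  rw [Finset.mem_inter, Finset.mem_sdiff] at hh0
  obtain ⟨hh0head, hh0U, hh0C⟩ := hh0
  have hneU : (r.head ∩ U).Nonempty := ⟨h0, Finset.mem_inter.2 ⟨hh0head, hh0U⟩⟩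
  rcases hU r hr hneU with h1 | h2 | ⟨h, hh, hhU, hhA⟩
  · exact Or.inl h1
  · refine Or.inr (Or.inl ?_)
    rcases h2 with ⟨a, ha, hv⟩ | ⟨a, ha, hv⟩ | ⟨e, he, hv⟩ | ⟨e, he, hv⟩
    · -- positive ordinary body atom
      by_cases hac : a ∈ C
      · exact absurd ⟨r, hr, hh0head, ha⟩
          (hO a hac h0 (Finset.mem_sdiff.2 ⟨hh0U, hh0C⟩)).2
      · exact Or.inl ⟨a, ha, (key a hac).trans hv⟩
    · -- negative ordinary body atom: true under unplug A U ⇒ a ∉ U ⇒ a ∉ C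
      have haU : a ∉ U := by
        intro haU
        simp [unplug, haU] at hv
      have hac : a ∉ C := fun h => haU (hCU h)
      exact Or.inr (Or.inl ⟨a, ha, (key a hac).trans hv⟩)
    · -- positive external atom
      refine Or.inr (Or.inr (Or.inl ⟨e, he, ?_⟩))
      have : e.eval (unplug A (U \ C)) = e.eval (unplug A U) := by
        apply e.dep
        intro a hain
        apply key
        intro hac
        exact hE a hac h0 hh0U ⟨r, hr, hh0head, e, by simp [he], hain⟩
      exact this.trans hv
    · -- negative external atom
      refine Or.inr (Or.inr (Or.inr ⟨e, he, ?_⟩))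
      have : e.eval (unplug A (U \ C)) = e.eval (unplug A U) := by
        apply e.dep
        intro a hain
        apply key
        intro hac
        exact hE a hac h0 hh0U ⟨r, hr, hh0head, e, by simp [he], hain⟩
      exact this.trans hv
  · exact Or.inr (Or.inr ⟨h, hh, fun hmem => hhU (Finset.mem_sdiff.1 hmem).1, hhA⟩)
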